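/- arXiv:1703.09533 — 2 statements merged into one kernel-verified Lean document; each statement's English description precedes it below -/
import Mathlib

section
/- Let p, s, q be points in ℝ², let t ≥ 3 be an integer, and let d be a metric on a set containing p, s, q satisfying d(x,y) ≤ |xy| whenever the segment xy is 'visible' and d satisfies the triangle inequality. Suppose s' is the point on segment pq with |ps'| = |ps| ≤ |pq|, the angle ∠(s,p,q) is at most 2π/t, and d(s,s') ≤ |ss'|, d(s',q) ≤ |s'q|. Then d(s,q) ≤ |pq| − (1 − 2 sin(π/t))|ps|. -/
open Real EuclideanGeometry

/-- Abstract version of the Yao/Θ-graph cone lemma (Lemma 3.1):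
`d` is a shortest-path style distance on the plane that satisfies the triangle
inequality and is bounded by the Euclidean distance on the relevant visible pairs. -/
theorem stmt_3 (p s q s' : EuclideanSpace ℝ (Fin 2)) (t : ℕ) (ht : 3 ≤ t)
    (d : EuclideanSpace ℝ (Fin 2) → EuclideanSpace ℝ (Fin 2) → ℝ)
    (htri : d s q ≤ d s s' + d s' q)
    (hseg : s' ∈ segment ℝ p q)
    (heq : dist p s' = dist p s) (hle : dist p s ≤ dist p q)
    (hangle : EuclideanGeometry.angle s p q ≤ 2 * π / t)
    (hds : d s s' ≤ dist s s') (hdq : d s' q ≤ dist s' q) :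
    d s q ≤ dist p q - (1 - 2 * Real.sin (π / t)) * dist p s := by
  have ht' : (3 : ℝ) ≤ t := by exact_mod_cast ht
  have htpos : (0:ℝ) < t := by linarith
  have hπt : 0 < π / t := div_pos Real.pi_pos htpos
  have hπt' : π / t ≤ π / 3 := by
    apply div_le_div_of_nonneg_left Real.pi_pos.le (by norm_num) ht'
  have hsin_nonneg : 0 ≤ Real.sin (π / t) :=
    Real.sin_nonneg_of_nonneg_of_le_pi hπt.le (by linarith [Real.pi_pos])
  -- length along the segment
  have hsum : dist p s' + dist s' q = dist p q :=
    dist_add_dist_eq_iff.mpr (mem_segment_iff_wbtw.mp hseg)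
  -- key bound: dist s s' ≤ 2 * sin (π/t) * dist p s
  have hkey : dist s s' ≤ 2 * Real.sin (π / t) * dist p s := by
    rcases eq_or_lt_of_le (dist_nonneg (x := p) (y := s)) with h0 | h0
    · have hsp : s = p := by
        have := dist_eq_zero.mp h0.symm; rwa [eq_comm] at this
      have hs'p : s' = p := by
        have : dist p s' = 0 := by rw [heq, ← h0]
        exact (dist_eq_zero.mp this).symm
      simp [hsp, hs'p]
    · -- s' = p + b • (q - p) with b > 0
      obtain ⟨a, b, ha, hb, hab, habs⟩ := hseg
      have hs'sub : s' - p = b • (q - p) := by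
        have : a • p + b • q = s' := habs
        have ha' : a = 1 - b := by linarith
        rw [← this, ha']
        module
      have hbpos : 0 < b := by
        rcases hb.lt_or_eq with h | h
        · exact h
        · exfalso
          have : s' = p := by
            have := hs'sub
            rw [← h, zero_smul, sub_eq_zero] at this
            exact this
          rw [this, dist_self] at heq
          exact absurd heq.symm (ne_of_gt h0)
      have hangle_eq : EuclideanGeometry.angle s p s' = EuclideanGeometry.angle s p q := by
        unfold EuclideanGeometry.angle
        have h1 : s' -ᵥ p = b • (q -ᵥ p) := hs'sub
        rw [h1]
        exact InnerProductGeometry.angle_smul_right_of_pos _ _ hbpos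
      -- law of cosines
      have hlaw := EuclideanGeometry.law_cos s p s'
      rw [hangle_eq, dist_comm s p, dist_comm s' p, heq] at hlaw
      -- cos monotonicity: cos (2π/t) ≤ cos (angle s p q)
      have hang_nonneg : 0 ≤ EuclideanGeometry.angle s p q := EuclideanGeometry.angle_nonneg _ _ _
      have hcos : Real.cos (2 * π / t) ≤ Real.cos (EuclideanGeometry.angle s p q) := by
        apply Real.cos_le_cos_of_nonneg_of_le_pi hang_nonneg _ hangle
        calc 2 * π / t ≤ 2 * π / 3 := by
              apply div_le_div_of_nonneg_left (by positivity) (by norm_num) ht'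
          _ ≤ π := by linarith [Real.pi_pos]
      -- cos (2π/t) = 1 - 2 sin(π/t)^2
      have hdouble : Real.cos (2 * π / t) = 1 - 2 * Real.sin (π / t) ^ 2 := by
        have : 2 * π / t = 2 * (π / t) := by ring
        rw [this, Real.cos_two_mul, ← Real.sin_sq_add_cos_sq (π / t)]
        ring
      have hsq : dist s s' ^ 2 ≤ (2 * Real.sin (π / t) * dist p s) ^ 2 := by
        nlinarith [hlaw, h0.le, hcos, hdouble, mul_nonneg (mul_nonneg h0.le h0.le) (sub_nonneg.mpr hcos)]
      have h2 : 0 ≤ 2 * Real.sin (π / t) * dist p s := by positivity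
      exact (pow_le_pow_iff_left₀ dist_nonneg h2 two_ne_zero).mp hsq
  have hq : dist s' q = dist p q - dist p s := by
    rw [← hsum, heq]; ring
  calc d s q ≤ d s s' + d s' q := htri
    _ ≤ dist s s' + dist s' q := add_le_add hds hdq
    _ ≤ 2 * Real.sin (π / t) * dist p s + (dist p q - dist p s) := by
        rw [hq]; linarith [hkey]
    _ = dist p q - (1 - 2 * Real.sin (π / t)) * dist p s := by ring
end

section
/- Let d : V × V → ℝ be a metric on a finite set V of points in the plane, let p, q, q', s ∈ V, ε > 0 and integer t ≥ 3 with 2 sin(π/t) ≤ 1 − 1/(1+ε). Assume d(p, q) = |pq'| + d(q', q) (q' is the first vertex on a shortest path from p to q), d(s, q') ≤ |pq'| − (1 − 2 sin(π/t))|ps|. Then d(s, q) ≤ d(p, q) − |ps|/(1 + ε). -/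
open Real

/-- Lemma 5.2: per-step progress of the routing scheme.  Here `d` is the
shortest-path metric on the vertex set, given abstractly via the triangle
inequality instance needed. -/
theorem stmt_7 (p q q' s : EuclideanSpace ℝ (Fin 2))
    (d : EuclideanSpace ℝ (Fin 2) → EuclideanSpace ℝ (Fin 2) → ℝ)
    (ε : ℝ) (hε : 0 < ε) (t : ℕ) (ht : 3 ≤ t)
    (hsin : 2 * Real.sin (π / t) ≤ 1 - 1 / (1 + ε))
    (htri : d s q ≤ d s q' + d q' q)
    (hfirst : d p q = dist p q' + d q' q)
    (hcone : d s q' ≤ dist p q' - (1 - 2 * Real.sin (π / t)) * dist p s) :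
    d s q ≤ d p q - dist p s / (1 + ε) := by
  have hps : (0:ℝ) ≤ dist p s := dist_nonneg
  have h1 : (0:ℝ) < 1 + ε := by linarith
  have : dist p s / (1 + ε) ≤ (1 - 2 * Real.sin (π / t)) * dist p s := by
    rw [div_le_iff₀ h1]
    have h2 : 1 / (1 + ε) ≤ 1 - 2 * Real.sin (π / t) := by linarith
    have h3 := mul_le_mul_of_nonneg_right h2 (mul_nonneg hps h1.le)
    rw [one_div, inv_mul_eq_div, mul_div_assoc, div_self h1.ne', mul_one] at h3
    linarith [h3, mul_assoc (1 - 2 * Real.sin (π / t)) (dist p s) (1+ε)]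
  linarith
end
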